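/- Let f be a transcendental entire function, let k > 1 and let r > 1 be such that M(s^j) ≥ M(s)^j for all s ≥ r and all j > 1, and such that M(r) > r^9 and δ(r) < min{1/(2π), (k−1)/4}. If m(s) > 1 for all s ∈ (r^{1+δ(r)}, r^{k−δ(r)}), then log m(s) ≥ (1 − 2πδ(r)) log M(s) > 0 for all s ∈ [r^{1+2δ(r)}, r^{k−2δ(r)}]. -/

import Mathlib

open Set Metric Filter Real

/-- `f` is a transcendental entire function: entire and not a polynomial. -/
def TranscendentalEntire (f : ℂ → ℂ) : Prop :=
  Differentiable ℂ f ∧ ¬ ∃ p : Polynomial ℂ, ∀ z, f z = p.eval z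

/-- The maximum modulus `M(r) = max_{|z| = r} |f z|`. -/
noncomputable def maxMod (f : ℂ → ℂ) (r : ℝ) : ℝ :=
  sSup ((fun z => ‖f z‖) '' Metric.sphere (0 : ℂ) r)

/-- The minimum modulus `m(r) = min_{|z| = r} |f z|`. -/
noncomputable def minMod (f : ℂ → ℂ) (r : ℝ) : ℝ :=
  sInf ((fun z => ‖f z‖) '' Metric.sphere (0 : ℂ) r)

/-- `δ(r) = 1 / √(log r)`. -/
noncomputable def del (r : ℝ) : ℝ := 1 / Real.sqrt (Real.log r)

section Aux

open intervalIntegral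


/-- Harnack-type inequality for the real part of a holomorphic function with
positive real part on a ball. -/
lemma harnack_re {g : ℂ → ℂ} {c : ℂ} {R : ℝ} (hg : DifferentiableOn ℂ g (ball c R))
    (hpos : ∀ z ∈ ball c R, 0 < (g z).re) {w : ℂ} (hw : w ∈ ball c R) :
    (R - dist w c) / (R + dist w c) * (g c).re ≤ (g w).re := by
  have hR : 0 < R := pos_of_mem_ball hw
  have hc : c ∈ ball c R := mem_ball_self hR
  set a : ℂ := g c with ha
  have hare : 0 < a.re := hpos c hc
  have hden : ∀ z ∈ ball c R, g z + (starRingEnd ℂ) a ≠ 0 := by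
    intro z hz h0
    have : (g z + (starRingEnd ℂ) a).re = (g z).re + a.re := by
      simp [Complex.add_re]
    rw [h0] at this
    simp at this
    nlinarith [hpos z hz]
  set φ : ℂ → ℂ := fun z => (g z - a) / (g z + (starRingEnd ℂ) a) with hφ
  have hφdiff : DifferentiableOn ℂ φ (ball c R) :=
    DifferentiableOn.div (hg.sub (differentiableOn_const _))
      (hg.add (differentiableOn_const _)) hden
  have hφc : φ c = 0 := by simp [hφ, ha]
  have key : ∀ z ∈ ball c R,
      Complex.normSq (g z - a) < Complex.normSq (g z + (starRingEnd ℂ) a) := by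
    intro z hz
    have h1 : 0 < (g z).re := hpos z hz
    simp only [Complex.normSq_apply, Complex.sub_re, Complex.sub_im, Complex.add_re,
      Complex.add_im, Complex.conj_re, Complex.conj_im]
    nlinarith
  have hmaps : MapsTo φ (ball c R) (ball (φ c) 1) := by
    intro z hz
    rw [hφc, mem_ball_zero_iff]
    have h2 := key z hz
    have h3 : ‖g z - a‖ < ‖g z + (starRingEnd ℂ) a‖ := by
      have := Complex.sq_norm (g z - a)
      have := Complex.sq_norm (g z + (starRingEnd ℂ) a)
      nlinarith [norm_nonneg (g z - a), norm_nonneg (g z + (starRingEnd ℂ) a)]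
    rw [hφ]
    simp only [norm_div]
    rw [div_lt_one (lt_of_le_of_lt (norm_nonneg _) h3)]
    exact h3
  have hschwarz := Complex.dist_le_div_mul_dist_of_mapsTo_ball hφdiff (hmaps.mono_right ball_subset_closedBall) hw
  rw [hφc, dist_zero_right] at hschwarz
  set q : ℂ := φ w with hq
  set t : ℝ := dist w c with ht
  have ht0 : 0 ≤ t := dist_nonneg
  have htR : t < R := mem_ball.mp hw
  have hqle : ‖q‖ ≤ t / R := by
    rw [div_eq_mul_inv]
    simpa [div_mul_eq_mul_div, mul_comm] using hschwarz
  have hq1 : ‖q‖ < 1 := lt_of_le_of_lt hqle (by rw [div_lt_one hR]; exact htR)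
  have hqne : (1 : ℂ) - q ≠ 0 := by
    intro h
    have : q = 1 := by linear_combination -h
    rw [this] at hq1; simp at hq1
  -- the basic identity
  have hid : g w * (1 - q) = a + q * (starRingEnd ℂ) a := by
    have h0 := hden w hw
    have : q * (g w + (starRingEnd ℂ) a) = g w - a := by
      rw [hq, hφ]; field_simp
    linear_combination -this
  have hre : (g w).re * Complex.normSq (1 - q) = a.re * (1 - Complex.normSq q) := by
    have h2 : g w * ((1 - q) * (starRingEnd ℂ) (1 - q))
        = (a + q * (starRingEnd ℂ) a) * (starRingEnd ℂ) (1 - q) := by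
      rw [← mul_assoc, hid]
    rw [Complex.mul_conj] at h2
    have h3 := congrArg Complex.re h2
    have h4 : (g w).re * ((1 - q.re) * (1 - q.re) + q.im * q.im) =
        (a.re + (q.re * a.re + q.im * a.im)) * (1 - q.re) -
          (a.im + (-(q.re * a.im) + q.im * a.re)) * q.im := by
      simpa [Complex.mul_re, Complex.add_re, Complex.add_im, Complex.mul_im, Complex.sub_re,
        Complex.sub_im, Complex.conj_re, Complex.conj_im, Complex.normSq_apply] using h3
    simp only [Complex.normSq_apply, Complex.sub_re, Complex.sub_im, Complex.one_re,
      Complex.one_im]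
    linear_combination h4
  -- final estimate
  set x : ℝ := ‖q‖ with hx
  set N : ℝ := Complex.normSq (1 - q) with hN
  have hNpos : 0 < N := Complex.normSq_pos.mpr hqne
  have hx0 : 0 ≤ x := norm_nonneg q
  have hx1 : x < 1 := hq1
  have hxt : x * R ≤ t := by
    rw [← le_div_iff₀ hR]; exact hqle
  have hsq : Complex.normSq q = x ^ 2 := (Complex.sq_norm q).symm
  have hNle : N ≤ (1 + x) ^ 2 := by
    have h5 : ‖1 - q‖ ≤ 1 + x := by
      calc ‖1 - q‖ = ‖(1:ℂ) - q‖ := rfl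
        _ ≤ ‖(1:ℂ)‖ + ‖q‖ := norm_sub_le 1 q
        _ = 1 + x := by simp [hx]
    calc N = ‖1 - q‖ ^ 2 := (Complex.sq_norm _).symm
      _ ≤ (1 + x) ^ 2 := by nlinarith [norm_nonneg (1 - q)]
  have hgw : (g w).re = a.re * (1 - x ^ 2) / N := by
    rw [eq_div_iff hNpos.ne']
    rw [← hsq]
    linear_combination hre
  rw [hgw, div_mul_eq_mul_div, div_le_div_iff₀ (by linarith) hNpos]
  nlinarith [mul_nonneg (mul_nonneg hare.le (sub_pos.mpr htR).le) (sub_nonneg.mpr hNle),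
    mul_nonneg (mul_nonneg hare.le (by linarith : (0:ℝ) ≤ 1 + x)) (sub_nonneg.mpr hxt),
    mul_pos hare hNpos]


/-- A holomorphic logarithm of a nonvanishing differentiable function on a ball. -/
lemma exists_log_on_ball {F : ℂ → ℂ} (hF : Differentiable ℂ F) {c : ℂ} {R : ℝ}
    (hne : ∀ z ∈ ball c R, F z ≠ 0) :
    ∃ g : ℂ → ℂ, DifferentiableOn ℂ g (ball c R) ∧
      ∀ z ∈ ball c R, Complex.exp (g z) = F z := by
  rcases le_or_gt R 0 with hR | hR
  · exact ⟨0, differentiableOn_const 0, fun z hz => absurd hz (by simp [ball_eq_empty.mpr hR])⟩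
  have hcball : c ∈ ball c R := mem_ball_self hR
  have hFa : AnalyticOnNhd ℂ F univ := hF.differentiableOn.analyticOnNhd isOpen_univ
  have hFd : Differentiable ℂ (deriv F) :=
    fun z => ((hFa.deriv) z (mem_univ z)).differentiableAt
  set G : ℂ → ℂ := fun z => deriv F z / F z with hGdef
  have hG : DifferentiableOn ℂ G (ball c R) :=
    (hFd.differentiableOn).div hF.differentiableOn hne
  have hGc : ContinuousOn G (ball c R) := hG.continuousOn
  have hGa : AnalyticOnNhd ℂ G (ball c R) := hG.analyticOnNhd isOpen_ball
  have hG' : ContinuousOn (deriv G) (ball c R) :=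
    (hGa.deriv).differentiableOn.continuousOn
  refine ⟨fun z => Complex.log (F c) + ∫ t in (0:ℝ)..1, (z - c) * G (c + t • (z - c)),
    ?_, ?_⟩
  · -- differentiability
    intro z₀ hz₀
    set ρ : ℝ := dist z₀ c with hρdef
    have hρ : ρ < R := mem_ball.mp hz₀
    have hρ0 : 0 ≤ ρ := dist_nonneg
    set ε : ℝ := (R - ρ) / 3 with hεdef
    have hε : 0 < ε := by simp only [hεdef]; linarith
    set R' : ℝ := ρ + 2 * ε with hR'def
    have hR' : R' < R := by simp only [hR'def, hεdef]; linarith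
    have hKball : closedBall c R' ⊆ ball c R := closedBall_subset_ball hR'
    have hsub : ∀ x ∈ ball z₀ ε, ∀ t ∈ Icc (0:ℝ) 1, c + t • (x - c) ∈ closedBall c R' := by
      intro x hx t ht
      have h1 : dist x c ≤ ρ + ε := by
        calc dist x c ≤ dist x z₀ + dist z₀ c := dist_triangle x z₀ c
          _ ≤ ε + ρ := by
              have := mem_ball.mp hx
              linarith [this.le]
          _ = ρ + ε := by ring
      have : dist (c + t • (x - c)) c = |t| * dist x c := by
        simp [dist_eq_norm, norm_smul, Real.norm_eq_abs, mul_comm]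
      rw [mem_closedBall, this]
      have ht1 : |t| ≤ 1 := by rw [abs_le]; constructor <;> linarith [ht.1, ht.2]
      calc |t| * dist x c ≤ 1 * (ρ + ε) := by
            apply mul_le_mul ht1 h1 dist_nonneg zero_le_one
        _ ≤ R' := by simp only [hR'def]; linarith
    obtain ⟨C1, hC1⟩ := (isCompact_closedBall c R').exists_bound_of_continuousOn
      (hGc.mono hKball)
    obtain ⟨C2, hC2⟩ := (isCompact_closedBall c R').exists_bound_of_continuousOn
      (hG'.mono hKball)
    -- continuity of integrand in t for fixed x in the small ball
    have hcont : ∀ x ∈ ball z₀ ε, ContinuousOn (fun t : ℝ => (x - c) * G (c + t • (x - c)))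
        (Icc (0:ℝ) 1) := by
      intro x hx
      apply continuousOn_const.mul
      apply hGc.comp
      · exact (continuous_const.add ((continuous_id.smul continuous_const))).continuousOn
      · intro t ht
        exact hKball (hsub x hx t ht)
    have key := intervalIntegral.hasDerivAt_integral_of_dominated_loc_of_deriv_le
      (𝕜 := ℂ) (μ := MeasureTheory.volume) (a := (0:ℝ)) (b := 1)
      (F := fun x t => (x - c) * G (c + t • (x - c)))
      (F' := fun x t => G (c + t • (x - c)) + (x - c) * (t • deriv G (c + t • (x - c))))
      (x₀ := z₀) (bound := fun _ => C1 + (ρ + ε) * C2) (ball_mem_nhds z₀ hε)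
      ?_ ?_ ?_ ?_ ?_ ?_
    · exact (((key.2).const_add (Complex.log (F c))).differentiableAt).differentiableWithinAt
    · -- hF_meas
      filter_upwards [ball_mem_nhds z₀ hε] with x hx
      exact ((hcont x hx).mono (by rw [uIoc_of_le zero_le_one]; exact Ioc_subset_Icc_self)
        ).aestronglyMeasurable measurableSet_uIoc
    · -- hF_int
      exact ((hcont z₀ (mem_ball_self hε)).mono (by rw [uIcc_of_le zero_le_one])
        ).intervalIntegrable
    · -- hF'_meas
      apply ContinuousOn.aestronglyMeasurable _ measurableSet_uIoc
      apply ContinuousOn.mono _ (by rw [uIoc_of_le zero_le_one]; exact Ioc_subset_Icc_self :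
        uIoc (0:ℝ) 1 ⊆ Icc 0 1)
      have hmap : ∀ t ∈ Icc (0:ℝ) 1, c + t • (z₀ - c) ∈ ball c R := fun t ht =>
        hKball (hsub z₀ (mem_ball_self hε) t ht)
      have hγcont : ContinuousOn (fun t : ℝ => c + t • (z₀ - c)) (Icc 0 1) :=
        (continuous_const.add ((continuous_id.smul continuous_const))).continuousOn
      exact (hGc.comp hγcont hmap).add
        (continuousOn_const.mul (ContinuousOn.smul continuousOn_id
          (hG'.comp hγcont hmap)))
    · -- h_bound
      apply MeasureTheory.ae_of_all
      intro t ht x hx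
      rw [uIoc_of_le zero_le_one] at ht
      have ht' : t ∈ Icc (0:ℝ) 1 := Ioc_subset_Icc_self ht
      have hmem := hsub x hx t ht'
      have hxc : ‖x - c‖ ≤ ρ + ε := by
        have h1 := dist_triangle x z₀ c
        have h2 := (mem_ball.mp hx).le
        rw [← dist_eq_norm]
        simp only [hρdef] at *
        linarith
      calc ‖G (c + t • (x - c)) + (x - c) * (t • deriv G (c + t • (x - c)))‖
          ≤ ‖G (c + t • (x - c))‖ + ‖(x - c) * (t • deriv G (c + t • (x - c)))‖ :=
            norm_add_le _ _
        _ ≤ C1 + (ρ + ε) * C2 := by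
            gcongr
            · exact hC1 _ hmem
            · rw [norm_mul, norm_smul, Real.norm_eq_abs, abs_of_pos ht.1]
              calc ‖x - c‖ * (t * ‖deriv G (c + t • (x - c))‖)
                  ≤ (ρ + ε) * (1 * C2) := by
                    apply mul_le_mul hxc _ (mul_nonneg ht.1.le (norm_nonneg _)) (by linarith)
                    apply mul_le_mul ht'.2 (hC2 _ hmem) (norm_nonneg _) zero_le_one
                _ = (ρ + ε) * C2 := by ring
    · -- bound_integrable
      exact intervalIntegrable_const
    · -- h_diff
      apply MeasureTheory.ae_of_all
      intro t ht x hx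
      rw [uIoc_of_le zero_le_one] at ht
      have ht' : t ∈ Icc (0:ℝ) 1 := Ioc_subset_Icc_self ht
      have hmem : c + t • (x - c) ∈ ball c R := hKball (hsub x hx t ht')
      have hinner : HasDerivAt (fun x : ℂ => c + t • (x - c)) ((t : ℂ)) x := by
        have h1 : HasDerivAt (fun x : ℂ => x - c) 1 x := (hasDerivAt_id x).sub_const c
        have h2 := (h1.const_smul t).const_add c
        refine h2.congr_deriv ?_
        simp [Complex.real_smul]
      have hGd : HasDerivAt G (deriv G (c + t • (x - c))) (c + t • (x - c)) :=
        (hG.differentiableAt (isOpen_ball.mem_nhds hmem)).hasDerivAt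
      have hcomp : HasDerivAt (fun x : ℂ => G (c + t • (x - c)))
          (deriv G (c + t • (x - c)) * (t : ℂ)) x := by
          have := hGd.comp x hinner
          exact this
      have hprod := ((hasDerivAt_id x).sub_const c).mul hcomp
      refine hprod.congr_deriv ?_
      simp only [Complex.real_smul, id_eq, one_mul]
      ring
  · -- exp (g z) = F z
    intro z hz
    set γ : ℝ → ℂ := fun τ => c + τ • (z - c) with hγdef
    have hγz : ∀ τ ∈ Icc (0:ℝ) 1, γ τ ∈ ball c R := by
      intro τ hτ
      have : dist (γ τ) c = |τ| * dist z c := by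
        simp [hγdef, dist_eq_norm, norm_smul, Real.norm_eq_abs, mul_comm]
      rw [mem_ball, this]
      have hτ1 : |τ| ≤ 1 := by rw [abs_le]; constructor <;> linarith [hτ.1, hτ.2]
      calc |τ| * dist z c ≤ 1 * dist z c :=
            mul_le_mul_of_nonneg_right hτ1 dist_nonneg
        _ = dist z c := one_mul _
        _ < R := mem_ball.mp hz
    have hγcont : Continuous γ := continuous_const.add (continuous_id.smul continuous_const)
    set U : Set ℝ := γ ⁻¹' (ball c R) with hUdef
    have hUopen : IsOpen U := isOpen_ball.preimage hγcont
    have hUsub : Icc (0:ℝ) 1 ⊆ U := fun τ hτ => hγz τ hτ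
    set u : ℝ → ℂ := fun τ => (z - c) * G (γ τ) with hudef
    have hu : ContinuousOn u U :=
      continuousOn_const.mul (hGc.comp hγcont.continuousOn (fun τ hτ => hτ))
    set A : ℝ → ℂ := fun τ => ∫ σ in (0:ℝ)..τ, u σ with hAdef
    have hA : ∀ τ ∈ Icc (0:ℝ) 1, HasDerivAt A (u τ) τ := by
      intro τ hτ
      apply intervalIntegral.integral_hasDerivAt_right
      · have hss : uIcc (0:ℝ) τ ⊆ U := by
          rw [uIcc_of_le hτ.1]
          exact fun σ hσ => hUsub ⟨hσ.1, le_trans hσ.2 hτ.2⟩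
        exact (hu.mono hss).intervalIntegrable
      · exact hu.stronglyMeasurableAtFilter hUopen _ (hUsub hτ)
      · exact hu.continuousAt (hUopen.mem_nhds (hUsub hτ))
    set h : ℝ → ℂ := fun τ => Complex.exp (-A τ) * F (γ τ) with hhdef
    have hhd : ∀ τ ∈ Icc (0:ℝ) 1, HasDerivAt h 0 τ := by
      intro τ hτ
      have hγ' : HasDerivAt γ (z - c) τ := by
        have := ((hasDerivAt_id τ).smul_const (z - c)).const_add c
        simpa [hγdef] using this
      have hFγ : HasDerivAt (fun τ => F (γ τ)) ((z - c) • deriv F (γ τ)) τ :=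
        (hF.differentiableAt.hasDerivAt).scomp τ hγ'
      have hexp : HasDerivAt (fun τ => Complex.exp (-A τ))
          (Complex.exp (-A τ) * (-u τ)) τ := ((hA τ hτ).neg).cexp
      have hprod := hexp.mul hFγ
      refine hprod.congr_deriv ?_
      have hFne : F (γ τ) ≠ 0 := hne _ (hγz τ hτ)
      simp only [hudef, hGdef, Complex.real_smul, smul_eq_mul]
      field_simp
      ring
    have hconst := constant_of_has_deriv_right_zero
      (fun τ hτ => (hhd τ hτ).continuousAt.continuousWithinAt)
      (fun τ hτ => ((hhd τ (Ico_subset_Icc_self hτ)).hasDerivWithinAt))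
      1 (right_mem_Icc.mpr zero_le_one)
    have hγ1 : γ 1 = z := by simp [hγdef]
    have hγ0 : γ 0 = c := by simp [hγdef]
    have hA0 : A 0 = 0 := intervalIntegral.integral_same
    rw [hhdef] at hconst
    simp only [hγ1, hγ0, hA0, neg_zero, Complex.exp_zero, one_mul] at hconst
    -- hconst : exp (-A 1) * F z = F c
    have hexpA : Complex.exp (A 1) * Complex.exp (-A 1) = 1 := by
      rw [← Complex.exp_add]; simp
    have hFz : F z = Complex.exp (A 1) * F c := by
      rw [← hconst, ← mul_assoc, hexpA, one_mul]
    rw [Complex.exp_add, Complex.exp_log (hne c hcball), hFz]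
    ring

lemma minMod_le_abs (f : ℂ → ℂ) (z : ℂ) : minMod f ‖z‖ ≤ ‖f z‖ := by
  apply csInf_le
  · exact ⟨0, fun y hy => by
      obtain ⟨w, _, rfl⟩ := hy; exact norm_nonneg _⟩
  · exact ⟨z, by simp [mem_sphere_iff_norm], rfl⟩

end Aux

theorem harnack_min_modulus_estimate (f : ℂ → ℂ) (hf : TranscendentalEntire f)
    (k r : ℝ) (hk : 1 < k) (hr : 1 < r)
    (hconv : ∀ s : ℝ, r ≤ s → ∀ j : ℝ, 1 < j → (maxMod f s) ^ j ≤ maxMod f (s ^ j))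
    (hM9 : maxMod f r > r ^ (9 : ℝ))
    (hdel : del r < min (1 / (2 * π)) ((k - 1) / 4))
    (hm : ∀ s ∈ Ioo (r ^ (1 + del r)) (r ^ (k - del r)), 1 < minMod f s) :
    ∀ s ∈ Icc (r ^ (1 + 2 * del r)) (r ^ (k - 2 * del r)),
      (1 - 2 * π * del r) * Real.log (maxMod f s) ≤ Real.log (minMod f s) ∧
      0 < (1 - 2 * π * del r) * Real.log (maxMod f s) := by
  intro s hs
  obtain ⟨hs1, hs2⟩ := hs
  have hr0 : (0:ℝ) < r := lt_trans one_pos hr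
  have hL : 0 < Real.log r := Real.log_pos hr
  set L : ℝ := Real.log r with hLdef
  have hsqL : 0 < Real.sqrt L := Real.sqrt_pos.mpr hL
  have hδpos : 0 < del r := by rw [del]; positivity
  have hδL : del r * L = Real.sqrt L := by
    rw [del, ← hLdef, one_div, inv_mul_eq_div, Real.div_sqrt]
  have hδsq : del r * Real.sqrt L = 1 := by
    rw [del, ← hLdef]; field_simp
  have hπ : 0 < π := Real.pi_pos
  have hδ2π : del r < 1 / (2 * π) := lt_of_lt_of_le hdel (min_le_left _ _)
  have h2πδ : 2 * π * del r < 1 := by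
    rw [lt_div_iff₀ (by positivity)] at hδ2π; linarith
  have hRgt : 2 * π < Real.sqrt L := by
    have h1 : del r * (2 * π) < (1 / (2 * π)) * (2 * π) :=
      mul_lt_mul_of_pos_right hδ2π (by positivity)
    rw [one_div_mul_cancel (by positivity : (2*π) ≠ 0)] at h1
    nlinarith [hδsq, hδpos]
  -- bounds on log s
  have hrp : ∀ x : ℝ, (0:ℝ) < r ^ x := fun x => Real.rpow_pos_of_pos hr0 x
  have hs0 : 0 < s := lt_of_lt_of_le (hrp _) hs1
  have hlogs1 : (1 + 2 * del r) * L ≤ Real.log s := by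
    rw [← Real.log_rpow hr0]
    exact Real.log_le_log (hrp _) hs1
  have hlogs2 : Real.log s ≤ (k - 2 * del r) * L := by
    rw [← Real.log_rpow hr0]
    exact Real.log_le_log hs0 hs2
  -- extremal points on the circle
  have hcontf : Continuous fun z => ‖f z‖ := continuous_norm.comp hf.1.continuous
  have himg : IsCompact ((fun z => ‖f z‖) '' sphere (0:ℂ) s) :=
    (isCompact_sphere _ _).image hcontf
  have hnem : ((fun z => ‖f z‖) '' sphere (0:ℂ) s).Nonempty :=
    (NormedSpace.sphere_nonempty.mpr hs0.le).image _
  obtain ⟨zmax, hzmaxs, hzmaxeq⟩ := himg.sSup_mem hnem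
  obtain ⟨zmin, hzmins, hzmineq⟩ := himg.sInf_mem hnem
  have habsmax : ‖zmax‖ = s := by
    simpa using mem_sphere_zero_iff_norm.mp hzmaxs
  have habsmin : ‖zmin‖ = s := by
    simpa using mem_sphere_zero_iff_norm.mp hzmins
  -- m(s) > 1
  have hsIoo : s ∈ Ioo (r ^ (1 + del r)) (r ^ (k - del r)) := by
    constructor
    · exact lt_of_lt_of_le ((Real.rpow_lt_rpow_left_iff hr).mpr (by linarith)) hs1
    · exact lt_of_le_of_lt hs2 ((Real.rpow_lt_rpow_left_iff hr).mpr (by linarith))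
  have hm1 : 1 < minMod f s := hm s hsIoo
  have hmM : minMod f s ≤ maxMod f s := csInf_le_csSup hnem himg.bddBelow himg.bddAbove
  have hM1 : 1 < maxMod f s := lt_of_lt_of_le hm1 hmM
  -- the logarithmic chart
  set R : ℝ := Real.sqrt L with hRdef
  set c : ℂ := (Real.log s : ℂ) + (zmax.arg : ℝ) * Complex.I with hcdef
  have hcre : c.re = Real.log s := by simp [hcdef]
  -- points of the ball have moduli in the annulus
  have hball : ∀ w ∈ ball c R,
      ‖Complex.exp w‖ ∈ Ioo (r ^ (1 + del r)) (r ^ (k - del r)) := by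
    intro w hw
    have h1 : |(w - c).re| ≤ ‖w - c‖ := Complex.abs_re_le_norm _
    have h2 : ‖w - c‖ < R := by
      rw [← Complex.dist_eq]; exact mem_ball.mp hw
    have h3 : |w.re - Real.log s| < R := by
      rw [← hcre]
      calc |w.re - c.re| = |(w - c).re| := by simp [Complex.sub_re]
        _ ≤ ‖w - c‖ := h1
        _ < R := h2
    rw [abs_lt] at h3
    have hlow : (1 + del r) * L < w.re := by
      have : (1 + del r) * L = (1 + 2 * del r) * L - del r * L := by ring
      rw [this, hδL]
      have := h3.1
      simp only [hRdef] at this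
      linarith
    have hhigh : w.re < (k - del r) * L := by
      have : (k - del r) * L = (k - 2 * del r) * L + del r * L := by ring
      rw [this, hδL]
      have := h3.2
      simp only [hRdef] at this
      linarith
    rw [Complex.norm_exp]
    constructor
    · rw [Real.rpow_def_of_pos hr0]
      exact Real.exp_lt_exp.mpr (by rw [mul_comm]; exact hlow)
    · rw [Real.rpow_def_of_pos hr0]
      exact Real.exp_lt_exp.mpr (by rw [mul_comm]; exact hhigh)
  set F : ℂ → ℂ := fun w => f (Complex.exp w) with hFdef
  have hFdiff : Differentiable ℂ F := hf.1.comp Complex.differentiable_exp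
  have hF1 : ∀ w ∈ ball c R, 1 < ‖F w‖ := by
    intro w hw
    exact lt_of_lt_of_le (hm _ (hball w hw)) (minMod_le_abs f (Complex.exp w))
  have hFne : ∀ w ∈ ball c R, F w ≠ 0 := by
    intro w hw h0
    have := hF1 w hw
    rw [h0] at this
    simp only [norm_zero] at this
    linarith
  obtain ⟨g, hgdiff, hgexp⟩ := exists_log_on_ball hFdiff hFne
  have hgre : ∀ w ∈ ball c R, Real.exp (g w).re = ‖F w‖ := by
    intro w hw
    rw [← Complex.norm_exp, hgexp w hw]
  have hpos : ∀ w ∈ ball c R, 0 < (g w).re := by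
    intro w hw
    have h1 := hF1 w hw
    rw [← hgre w hw] at h1
    have h2 : rexp 0 < rexp (g w).re := by rw [Real.exp_zero]; exact h1
    exact Real.exp_lt_exp.mp h2
  have hRpos : 0 < R := hsqL
  have hcball : c ∈ ball c R := mem_ball_self hRpos
  have hexpc : Complex.exp c = zmax := by
    rw [hcdef, Complex.exp_add, ← Complex.ofReal_exp, Real.exp_log hs0, ← habsmax]
    exact Complex.norm_mul_exp_arg_mul_I zmax
  -- choose the short way around the circle
  set d : ℝ := zmin.arg - zmax.arg with hddef
  obtain ⟨t, htle, hte⟩ : ∃ t : ℝ, |t| ≤ π ∧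
      Complex.exp (↑t * Complex.I) = Complex.exp (↑d * Complex.I) := by
    have ha1 := Complex.neg_pi_lt_arg zmin
    have ha2 := Complex.arg_le_pi zmin
    have ha3 := Complex.neg_pi_lt_arg zmax
    have ha4 := Complex.arg_le_pi zmax
    rcases le_or_gt d π with hd1 | hd1
    · rcases le_or_gt (-π) d with hd2 | hd2
      · exact ⟨d, abs_le.mpr ⟨hd2, hd1⟩, rfl⟩
      · refine ⟨d + 2 * π, abs_le.mpr ⟨by simp only [hddef] at *; linarith,
          by simp only [hddef] at *; linarith⟩, ?_⟩
        push_cast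
        rw [add_mul, Complex.exp_add]
        simp [Complex.exp_two_pi_mul_I]
    · refine ⟨d - 2 * π, abs_le.mpr ⟨by simp only [hddef] at *; linarith,
        by simp only [hddef] at *; linarith⟩, ?_⟩
      push_cast
      rw [sub_mul, Complex.exp_sub]
      simp [Complex.exp_two_pi_mul_I]
  set w : ℂ := c + (t : ℝ) * Complex.I with hwdef
  have hdist : dist w c = |t| := by
    rw [hwdef, dist_eq_norm]
    simp
  have hwball : w ∈ ball c R := by
    rw [mem_ball, hdist]
    calc |t| ≤ π := htle
      _ < 2 * π := by linarith
      _ < R := hRgt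
  have hexpw : Complex.exp w = zmin := by
    rw [hwdef, Complex.exp_add, hexpc]
    have h1 : zmax = (s : ℂ) * Complex.exp (↑zmax.arg * Complex.I) := by
      rw [← habsmax]
      exact (Complex.norm_mul_exp_arg_mul_I zmax).symm
    have h2 : zmin = (s : ℂ) * Complex.exp (↑zmin.arg * Complex.I) := by
      rw [← habsmin]
      exact (Complex.norm_mul_exp_arg_mul_I zmin).symm
    rw [h1, h2, mul_assoc, ← Complex.exp_add]
    congr 1
    rw [Complex.exp_add, hte, ← Complex.exp_add]
    congr 1
    push_cast [hddef]
    ring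
  -- identify the real parts
  have hgcre : (g c).re = Real.log (maxMod f s) := by
    have h1 : Real.exp (g c).re = maxMod f s := by
      rw [hgre c hcball, hFdef]
      simp only [hexpc]
      exact hzmaxeq
    rw [← h1, Real.log_exp]
  have hgwre : (g w).re = Real.log (minMod f s) := by
    have h1 : Real.exp (g w).re = minMod f s := by
      rw [hgre w hwball, hFdef]
      simp only [hexpw]
      exact hzmineq
    rw [← h1, Real.log_exp]
  -- Harnack
  have hharnack := harnack_re hgdiff hpos hwball
  rw [hgcre, hgwre, hdist] at hharnack
  have hlogM : 0 < Real.log (maxMod f s) := Real.log_pos hM1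
  have hfrac : 1 - 2 * π * del r ≤ (R - |t|) / (R + |t|) := by
    rw [le_div_iff₀ (by positivity)]
    have h1 : del r * R = 1 := hδsq
    nlinarith [abs_nonneg t, mul_nonneg hδpos.le (abs_nonneg t)]
  constructor
  · calc (1 - 2 * π * del r) * Real.log (maxMod f s)
        ≤ (R - |t|) / (R + |t|) * Real.log (maxMod f s) :=
          mul_le_mul_of_nonneg_right hfrac hlogM.le
      _ ≤ Real.log (minMod f s) := hharnack
  · exact mul_pos (by linarith) hlogM
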